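/- Let E and F be subspaces of a finite-dimensional real inner product space with E∩F={0}, and let ℓ≥1 be a real number. Suppose that |⟨v₀,w₀⟩| ≤ 1−1/ℓ for all unit vectors v₀∈E and w₀∈F. Then for every v∈E and w∈F one has ‖v‖ ≤ ℓ·‖v+w‖ and ‖w‖ ≤ ℓ·‖v+w‖. -/

import Mathlib

theorem norm_bound_from_angle_bound
    {V : Type*} [NormedAddCommGroup V] [InnerProductSpace ℝ V] [FiniteDimensional ℝ V]
    (E F : Submodule ℝ V) (hEF : E ⊓ F = ⊥)
    (ℓ : ℝ) (hℓ : 1 ≤ ℓ)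
    (hangle : ∀ v₀ ∈ E, ∀ w₀ ∈ F, ‖v₀‖ = 1 → ‖w₀‖ = 1 →
      |(inner ℝ v₀ w₀ : ℝ)| ≤ 1 - 1 / ℓ) :
    ∀ v ∈ E, ∀ w ∈ F, ‖v‖ ≤ ℓ * ‖v + w‖ ∧ ‖w‖ ≤ ℓ * ‖v + w‖ := by
  have hℓ0 : (0:ℝ) < ℓ := lt_of_lt_of_le one_pos hℓ
  -- key: |⟨v,w⟩| ≤ (1 - 1/ℓ) ‖v‖ ‖w‖ for v ∈ E, w ∈ F
  have key : ∀ v ∈ E, ∀ w ∈ F, |(inner ℝ v w : ℝ)| ≤ (1 - 1/ℓ) * ‖v‖ * ‖w‖ := by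
    intro v hv w hw
    rcases eq_or_ne v 0 with rfl | hv0
    · simp [inner_zero_left]
    rcases eq_or_ne w 0 with rfl | hw0
    · simp [inner_zero_right]
    have hnv : (0:ℝ) < ‖v‖ := norm_pos_iff.mpr hv0
    have hnw : (0:ℝ) < ‖w‖ := norm_pos_iff.mpr hw0
    have h := hangle (‖v‖⁻¹ • v) (E.smul_mem _ hv) (‖w‖⁻¹ • w) (F.smul_mem _ hw)
      (norm_smul_inv_norm hv0) (norm_smul_inv_norm hw0)
    rw [real_inner_smul_left, real_inner_smul_right, abs_mul, abs_mul,
      abs_inv, abs_inv, abs_norm, abs_norm] at h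
    calc |(inner ℝ v w : ℝ)| = ‖v‖ * ‖w‖ * (‖v‖⁻¹ * (‖w‖⁻¹ * |(inner ℝ v w : ℝ)|)) := by
          field_simp
      _ ≤ ‖v‖ * ‖w‖ * (1 - 1/ℓ) :=
          mul_le_mul_of_nonneg_left h (by positivity)
      _ = (1 - 1/ℓ) * ‖v‖ * ‖w‖ := by ring
  intro v hv w hw
  set a := ‖v‖ with ha
  set b := ‖w‖ with hb
  set c := ‖v + w‖ with hc
  have hiv := key v hv w hw
  have hsq : c^2 = a^2 + 2 * (inner ℝ v w : ℝ) + b^2 := by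
    rw [hc, ha, hb, norm_add_sq_real]
  have ha0 : 0 ≤ a := norm_nonneg v
  have hb0 : 0 ≤ b := norm_nonneg w
  have hi' : -((1 - 1/ℓ) * a * b) ≤ (inner ℝ v w : ℝ) := neg_le_of_abs_le hiv
  have hi2 : 0 ≤ ℓ * (inner ℝ v w : ℝ) + (ℓ - 1) * a * b := by
    have h2 := mul_le_mul_of_nonneg_left hi' hℓ0.le
    have h3 : ℓ * -((1 - 1/ℓ) * a * b) = -((ℓ - 1) * a * b) := by
      field_simp
    linarith [h3 ▸ h2]
  have hA : a^2 ≤ (ℓ * c)^2 := by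
    have h1 : (ℓ*c)^2 - a^2 = (ℓ*b - (ℓ-1)*a)^2 + 2*(ℓ-1)*a^2
        + 2*ℓ*(ℓ*(inner ℝ v w : ℝ) + (ℓ-1)*a*b) := by
      rw [mul_pow, hsq]; ring
    nlinarith [sq_nonneg (ℓ*b - (ℓ-1)*a), mul_nonneg (by positivity : (0:ℝ) ≤ 2*ℓ) hi2,
      mul_nonneg (mul_nonneg (by linarith : (0:ℝ) ≤ 2*(ℓ-1)) ha0) ha0]
  have hB : b^2 ≤ (ℓ * c)^2 := by
    have h1 : (ℓ*c)^2 - b^2 = (ℓ*a - (ℓ-1)*b)^2 + 2*(ℓ-1)*b^2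
        + 2*ℓ*(ℓ*(inner ℝ v w : ℝ) + (ℓ-1)*a*b) := by
      rw [mul_pow, hsq]; ring
    nlinarith [sq_nonneg (ℓ*a - (ℓ-1)*b), mul_nonneg (by positivity : (0:ℝ) ≤ 2*ℓ) hi2,
      mul_nonneg (mul_nonneg (by linarith : (0:ℝ) ≤ 2*(ℓ-1)) hb0) hb0]
  constructor
  · have := Real.sqrt_le_sqrt hA
    rwa [Real.sqrt_sq ha0, Real.sqrt_sq (by positivity)] at this
  · have := Real.sqrt_le_sqrt hB
    rwa [Real.sqrt_sq hb0, Real.sqrt_sq (by positivity)] at this
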